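/- Let N ≥ 3, 1 < p < N/(N−2), M ∈ ℝ, α = 2/(p−1), and Φ_p(X) = X^{p−1} − M α^{2p/(p+1)} X^{(p−1)/(p+1)} + α(N−2−α). Then Φ_p has exactly one positive root. -/

import Mathlib

noncomputable def Phi (N : ℕ) (p α M X : ℝ) : ℝ :=
  X ^ (p - 1) - M * α ^ (2 * p / (p + 1)) * X ^ ((p - 1) / (p + 1)) +
    α * ((N : ℝ) - 2 - α)

theorem stmt_9 (N : ℕ) (p α M : ℝ) (hN : 3 ≤ N)
    (hp1 : 1 < p) (hp2 : p < (N : ℝ) / ((N : ℝ) - 2)) (hα : α = 2 / (p - 1)) :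
    ∃! X : ℝ, 0 < X ∧ Phi N p α M X = 0 := by
  have hNR : (3 : ℝ) ≤ (N : ℝ) := by exact_mod_cast hN
  have hN2 : (0 : ℝ) < (N : ℝ) - 2 := by linarith
  have hpm : (0 : ℝ) < p - 1 := by linarith
  have hpp : (0 : ℝ) < p + 1 := by linarith
  set C : ℝ := M * α ^ (2 * p / (p + 1)) with hC
  set K : ℝ := α * ((N : ℝ) - 2 - α) with hK
  set a : ℝ := (p - 1) * p / (p + 1) with ha_def
  set b : ℝ := (p - 1) / (p + 1) with hb_def
  have ha : 0 < a := by positivity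
  have hb : 0 < b := by positivity
  have hab : b + a = p - 1 := by rw [ha_def, hb_def, ← add_div, div_eq_iff hpp.ne']; ring
  -- K < 0
  have hαpos : 0 < α := by rw [hα]; positivity
  have hKneg : K < 0 := by
    have h2 : (N : ℝ) - 2 - α < 0 := by
      rw [hα, sub_neg, lt_div_iff₀ hpm]
      nlinarith [(lt_div_iff₀ hN2).mp hp2]
    exact mul_neg_of_pos_of_neg hαpos h2
  set G : ℝ → ℝ := fun X => X ^ a + K * X ^ (-b) - C with hG
  -- Phi = X^b * G X for X > 0
  have hPhi : ∀ X : ℝ, 0 < X → Phi N p α M X = X ^ b * G X := by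
    intro X hX
    have h1 : X ^ b * X ^ a = X ^ (p - 1) := by
      rw [← Real.rpow_add hX, hab]
    have h2 : X ^ b * X ^ (-b) = 1 := by
      rw [← Real.rpow_add hX]; simp
    simp only [hG, Phi]
    calc X ^ (p - 1) - M * α ^ (2 * p / (p + 1)) * X ^ ((p - 1) / (p + 1))
          + α * ((N : ℝ) - 2 - α)
        = X ^ b * X ^ a + K * (X ^ b * X ^ (-b)) - C * X ^ b := by
          rw [h1, h2, ← hb_def, ← hC, ← hK]; ring
      _ = X ^ b * (X ^ a + K * X ^ (-b) - C) := by ring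
  -- G strictly monotone on Ioi 0
  have hmono : StrictMonoOn G (Set.Ioi 0) := by
    intro x hx y hy hxy
    simp only [Set.mem_Ioi] at hx hy
    have h1 : x ^ a < y ^ a := Real.rpow_lt_rpow hx.le hxy ha
    have h2 : y ^ (-b) < x ^ (-b) := by
      rw [Real.rpow_neg hx.le, Real.rpow_neg hy.le]
      exact inv_strictAnti₀ (Real.rpow_pos_of_pos hx b) (Real.rpow_lt_rpow hx.le hxy hb)
    have h3 : K * x ^ (-b) < K * y ^ (-b) := by
      have := mul_lt_mul_of_neg_left h2 hKneg
      linarith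
    simp only [hG]
    linarith
  -- witnesses
  set R : ℝ := max 1 (C - K + 1) with hR
  have hR1 : (1 : ℝ) ≤ R := le_max_left _ _
  have hRpos : 0 < R := lt_of_lt_of_le one_pos hR1
  set x₂ : ℝ := R ^ a⁻¹ with hx₂def
  have hx₂1 : 1 ≤ x₂ := by
    rw [hx₂def]
    calc (1:ℝ) = (1:ℝ) ^ a⁻¹ := (Real.one_rpow _).symm
      _ ≤ R ^ a⁻¹ := Real.rpow_le_rpow zero_le_one hR1 (by positivity)
  have hx₂pos : 0 < x₂ := lt_of_lt_of_le one_pos hx₂1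
  have hx₂a : x₂ ^ a = R := by
    rw [hx₂def, ← Real.rpow_mul hRpos.le, inv_mul_cancel₀ ha.ne', Real.rpow_one]
  have hGx₂ : 0 < G x₂ := by
    have h1 : x₂ ^ (-b) ≤ 1 := Real.rpow_le_one_of_one_le_of_nonpos hx₂1 (by linarith)
    have h2 : K * x₂ ^ (-b) ≥ K * 1 := by
      have := mul_le_mul_of_nonpos_left h1 hKneg.le
      linarith
    have h3 : C - K + 1 ≤ R := le_max_right _ _
    simp only [hG]
    rw [hx₂a]
    linarith
  set S : ℝ := max 1 ((C - 1) / K + 1) with hS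
  have hS1 : (1 : ℝ) ≤ S := le_max_left _ _
  have hSpos : 0 < S := lt_of_lt_of_le one_pos hS1
  set x₁ : ℝ := S ^ (-b⁻¹) with hx₁def
  have hx₁pos : 0 < x₁ := Real.rpow_pos_of_pos hSpos _
  have hx₁1 : x₁ ≤ 1 := Real.rpow_le_one_of_one_le_of_nonpos hS1 (by
    simp only [neg_nonpos]; positivity)
  have hx₁b : x₁ ^ (-b) = S := by
    rw [hx₁def, ← Real.rpow_mul hSpos.le]
    rw [show (-b⁻¹) * (-b) = b⁻¹ * b by ring, inv_mul_cancel₀ hb.ne', Real.rpow_one]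
  have hGx₁ : G x₁ < 0 := by
    have h1 : x₁ ^ a ≤ 1 := Real.rpow_le_one hx₁pos.le hx₁1 ha.le
    have h2 : (C - 1) / K < S := lt_of_lt_of_le (by linarith [le_max_right (1:ℝ) ((C - 1) / K + 1)]) le_rfl
    have h3 : S * K < C - 1 := (div_lt_iff_of_neg hKneg).mp h2
    simp only [hG]
    rw [hx₁b]
    nlinarith
  have hx₁x₂ : x₁ ≤ x₂ := le_trans hx₁1 hx₂1
  -- continuity of G on [x₁, x₂]
  have hcont : ContinuousOn G (Set.Icc x₁ x₂) := by
    have hsub : Set.Icc x₁ x₂ ⊆ {x : ℝ | x ≠ 0} := by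
      intro x hx
      exact ne_of_gt (lt_of_lt_of_le hx₁pos hx.1)
    apply ContinuousOn.sub
    apply ContinuousOn.add
    · exact (continuousOn_id.rpow_const fun x hx => Or.inl (hsub hx))
    · exact continuousOn_const.mul (continuousOn_id.rpow_const fun x hx => Or.inl (hsub hx))
    · exact continuousOn_const
  have hIVT := intermediate_value_Icc hx₁x₂ hcont
  have hmem : (0 : ℝ) ∈ Set.Icc (G x₁) (G x₂) := ⟨hGx₁.le, hGx₂.le⟩
  obtain ⟨x₀, hx₀mem, hx₀⟩ := hIVT hmem
  have hx₀pos : 0 < x₀ := lt_of_lt_of_le hx₁pos hx₀mem.1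
  refine ⟨x₀, ⟨hx₀pos, ?_⟩, ?_⟩
  · rw [hPhi x₀ hx₀pos, hx₀, mul_zero]
  · rintro y ⟨hy, hPy⟩
    have hGy : G y = 0 := by
      have := hPhi y hy
      rw [hPy] at this
      have hb' : (0:ℝ) < y ^ b := Real.rpow_pos_of_pos hy b
      rcases mul_eq_zero.mp this.symm with h | h
      · exact absurd h hb'.ne'
      · exact h
    exact hmono.injOn (Set.mem_Ioi.mpr hy) (Set.mem_Ioi.mpr hx₀pos) (by rw [hGy, hx₀])
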